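/- arXiv:2012.03246 — 4 statements merged into one kernel-verified Lean document; each statement's English description precedes it below -/
import Mathlib

section
/- Let Γ be a connected graph with β-stable intervals (β ≥ 1), and let k ≥ 0. If P is a path in Γ of length d_Γ(P_-,P_+) + k and v is a vertex on P, then there exists a geodesic Q in Γ with the same endpoints as P and a vertex w on Q such that d_Γ(v,w) ≤ βk. -/
open SimpleGraph

/-- The Vietoris–Rips graph of `G` at scale `N`: same vertices, with distinct
vertices adjacent iff their `G`-distance is at most `N`. -/
def rips {V : Type*} (G : SimpleGraph V) (N : ℕ) : SimpleGraph V where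
  Adj u v := u ≠ v ∧ G.dist u v ≤ N
  symm := ⟨fun u v h => ⟨h.1.symm, by rw [SimpleGraph.dist_comm]; exact h.2⟩⟩
  loopless := ⟨fun v h => h.1 rfl⟩

/-- The ball of radius `ρ` around `x` in the graph `G` (combinatorial metric). -/
def gball {V : Type*} (G : SimpleGraph V) (x : V) (ρ : ℕ) : Set V :=
  {u : V | G.dist u x ≤ ρ}

/-- A graph has `β`-stable intervals if for every geodesic `P`, every vertex `w` on `P`,
and every vertex `u` at distance `1` from `P`'s start, there is a geodesic from `u` to
`P`'s end containing a vertex within distance `β` of `w`. -/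
def HasStableIntervals {V : Type*} (G : SimpleGraph V) (β : ℕ) : Prop :=
  ∀ ⦃a b : V⦄ (P : G.Walk a b), P.length = G.dist a b →
    ∀ w ∈ P.support, ∀ u : V, G.dist u a = 1 →
      ∃ Q : G.Walk u b, Q.length = G.dist u b ∧ ∃ v ∈ Q.support, G.dist w v ≤ β

theorem stmt4 {V : Type*} (Γ : SimpleGraph V) (hconn : Γ.Connected)
    (β : ℕ) (hβ : 1 ≤ β) (hstable : HasStableIntervals Γ β)
    (k : ℕ) {a b : V} (P : Γ.Walk a b) (hP : P.length = Γ.dist a b + k)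
    (v : V) (hv : v ∈ P.support) :
    ∃ Q : Γ.Walk a b, Q.length = Γ.dist a b ∧ ∃ w ∈ Q.support, Γ.dist v w ≤ β * k := by
  induction P generalizing k with
  | nil =>
    simp only [SimpleGraph.Walk.support_nil, List.mem_singleton] at hv
    subst hv
    refine ⟨.nil, ?_, v, ?_, ?_⟩ <;> simp [SimpleGraph.dist_self]
  | @cons a a' b h p ih =>
    have hda : Γ.dist a a' = 1 := SimpleGraph.dist_eq_one_iff_adj.mpr h
    simp only [SimpleGraph.Walk.support_cons, List.mem_cons] at hv
    rcases hv with rfl | hv'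
    · obtain ⟨Q, hQ⟩ := hconn.exists_walk_length_eq_dist v b
      exact ⟨Q, hQ, v, Q.start_mem_support, by rw [SimpleGraph.dist_self]; exact Nat.zero_le _⟩
    · have hlen : p.length + 1 = Γ.dist a b + k := by
        simpa [SimpleGraph.Walk.length_cons] using hP
      have hple : Γ.dist a' b ≤ p.length := SimpleGraph.dist_le p
      set k' := p.length - Γ.dist a' b with hk'
      have hp' : p.length = Γ.dist a' b + k' := by omega
      obtain ⟨Q', hQ'len, w', hw'Q', hvw'⟩ := ih k' hp' hv'
      rcases le_or_gt (Γ.dist a b) (Γ.dist a' b) with hcase | hcase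
      · -- use stable intervals
        have hk1 : k' + 1 ≤ k := by omega
        obtain ⟨Q, hQlen, w, hwQ, hww'⟩ := hstable Q' hQ'len w' hw'Q' a hda
        refine ⟨Q, hQlen, w, hwQ, ?_⟩
        calc Γ.dist v w ≤ Γ.dist v w' + Γ.dist w' w := hconn.dist_triangle
          _ ≤ β * k' + β := add_le_add hvw' hww'
          _ ≤ β * k := by nlinarith
      · -- extend by the edge
        have htri : Γ.dist a b ≤ Γ.dist a a' + Γ.dist a' b := hconn.dist_triangle
        have heq : Γ.dist a b = Γ.dist a' b + 1 := by omega
        have hk : k' = k := by omega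
        refine ⟨.cons h Q', ?_, w', ?_, ?_⟩
        · simp [SimpleGraph.Walk.length_cons, hQ'len, heq]
        · simp [SimpleGraph.Walk.support_cons, hw'Q']
        · exact hk ▸ hvw'
end

section
/- Let Γ be a connected graph with β-stable intervals (β ≥ 1) and let N ≥ 1. Then the Vietoris–Rips graph Γ_N has (3β+1)-stable intervals. -/
open SimpleGraph

namespace StableAux

variable {V : Type*} {G : SimpleGraph V}

lemma exists_geodesic (hconn : G.Connected) (x y : V) :
    ∃ W : G.Walk x y, W.length = G.dist x y :=
  (hconn.preconnected x y).exists_walk_length_eq_dist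

lemma dist_getVert_left (hconn : G.Connected) {x y : V} (W : G.Walk x y) (k : ℕ) :
    G.dist x (W.getVert k) ≤ k := by
  induction W generalizing k with
  | nil =>
    rw [Walk.getVert_of_length_le _ (Nat.zero_le k)]
    simp [SimpleGraph.dist_self]
  | @cons x x' y h p ih =>
    cases k with
    | zero => simp [Walk.getVert_zero, SimpleGraph.dist_self]
    | succ k =>
      rw [Walk.getVert_cons_succ]
      have h0 : G.dist x (p.getVert k) ≤ G.dist x x' + G.dist x' (p.getVert k) :=
        hconn.dist_triangle
      have h1 : G.dist x x' = 1 := SimpleGraph.dist_eq_one_iff_adj.mpr h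
      have h2 := ih k
      omega

lemma dist_getVert_right {x y : V} (W : G.Walk x y) (k : ℕ) :
    G.dist (W.getVert k) y ≤ W.length - k := by
  induction W generalizing k with
  | nil =>
    rw [Walk.getVert_of_length_le _ (Nat.zero_le k)]
    simp [SimpleGraph.dist_self]
  | @cons x x' y h p ih =>
    cases k with
    | zero =>
      rw [Walk.getVert_zero]
      have := SimpleGraph.dist_le (Walk.cons h p)
      simpa using this
    | succ k =>
      rw [Walk.getVert_cons_succ]
      have := ih k
      simp only [Walk.length_cons]
      omega

lemma geodesic_getVert (hconn : G.Connected) {x y : V} (W : G.Walk x y)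
    (hW : W.length = G.dist x y) {k : ℕ} (hk : k ≤ W.length) :
    G.dist x (W.getVert k) = k ∧ G.dist (W.getVert k) y = W.length - k := by
  have h1 := dist_getVert_left hconn W k
  have h2 := dist_getVert_right W k
  have h3 : G.dist x y ≤ G.dist x (W.getVert k) + G.dist (W.getVert k) y :=
    hconn.dist_triangle
  omega

lemma geodesic_split [DecidableEq V] (hconn : G.Connected) {x y : V} (W : G.Walk x y)
    (hW : W.length = G.dist x y) {w : V} (hw : w ∈ W.support) :
    G.dist x w + G.dist w y = G.dist x y ∧ G.dist x w = (W.takeUntil w hw).length := by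
  have hts := W.take_spec hw
  have hlen : (W.takeUntil w hw).length + (W.dropUntil w hw).length = W.length := by
    rw [← Walk.length_append, hts]
  have h1 : G.dist x w ≤ (W.takeUntil w hw).length := SimpleGraph.dist_le _
  have h2 : G.dist w y ≤ (W.dropUntil w hw).length := SimpleGraph.dist_le _
  have h3 : G.dist x y ≤ G.dist x w + G.dist w y := hconn.dist_triangle
  omega

section Rips

variable {Γ : SimpleGraph V} {N : ℕ}

lemma rips_le (hN : 1 ≤ N) : Γ ≤ rips Γ N := by
  intro u v h
  exact ⟨h.ne, (SimpleGraph.dist_eq_one_iff_adj.mpr h).le.trans hN⟩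

lemma rips_connected (hconn : Γ.Connected) (hN : 1 ≤ N) : (rips Γ N).Connected :=
  hconn.mono (rips_le hN)

/-- L1 : Γ-distance is at most N times rips-distance. -/
lemma dist_le_N_mul (hconn : Γ.Connected) (hN : 1 ≤ N) (x y : V) :
    Γ.dist x y ≤ N * (rips Γ N).dist x y := by
  obtain ⟨W, hW⟩ := exists_geodesic (rips_connected hconn hN) x y
  rw [← hW]
  clear hW
  induction W with
  | nil => simp [SimpleGraph.dist_self]
  | @cons x x' y h p ih =>
    calc Γ.dist x y ≤ Γ.dist x x' + Γ.dist x' y := hconn.dist_triangle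
      _ ≤ N + N * p.length := Nat.add_le_add h.2 ih
      _ = N * (Walk.cons h p).length := by
          simp [Walk.length_cons, Nat.mul_succ]; ring

/-- L2' : if Γ-distance is at most j*N then rips-distance is at most j. -/
lemma rips_dist_le (hconn : Γ.Connected) (hN : 1 ≤ N) :
    ∀ j : ℕ, ∀ x y : V, Γ.dist x y ≤ j * N → (rips Γ N).dist x y ≤ j := by
  intro j
  induction j with
  | zero =>
    intro x y h
    have hxy : x = y := hconn.dist_eq_zero_iff.mp (by omega)
    subst hxy
    simp [SimpleGraph.dist_self]
  | succ j ih =>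
    intro x y h
    by_cases hxy : x = y
    · subst hxy; simp [SimpleGraph.dist_self]
    by_cases hle : Γ.dist x y ≤ N
    · have hadj : (rips Γ N).Adj x y := ⟨hxy, hle⟩
      have := (SimpleGraph.dist_eq_one_iff_adj.mpr hadj).le
      omega
    · push_neg at hle
      obtain ⟨W, hW⟩ := exists_geodesic hconn x y
      have hNlen : N ≤ W.length := by omega
      obtain ⟨hz1, hz2⟩ := geodesic_getVert hconn W hW hNlen
      have hrel : (j + 1) * N = j * N + N := by ring
      have hzy : Γ.dist (W.getVert N) y ≤ j * N := by omega
      have hxz : (rips Γ N).Adj x (W.getVert N) := by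
        refine ⟨?_, hz1.le⟩
        intro hx
        rw [← hx] at hz1
        rw [SimpleGraph.dist_self] at hz1
        omega
      have t1 : (rips Γ N).dist x y ≤
          (rips Γ N).dist x (W.getVert N) + (rips Γ N).dist (W.getVert N) y :=
        (rips_connected hconn hN).dist_triangle
      have t2 : (rips Γ N).dist x (W.getVert N) ≤ 1 :=
        (SimpleGraph.dist_eq_one_iff_adj.mpr hxz).le
      have t3 := ih (W.getVert N) y hzy
      omega

end Rips

section Stable

variable {Γ : SimpleGraph V} {β : ℕ}

/-- Lemma A : iterated stability, moving the start point distance ≤ k costs β·k. -/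
lemma stable_iter (hconn : Γ.Connected) (hstable : HasStableIntervals Γ β) :
    ∀ k : ℕ, ∀ {a b : V} (P : Γ.Walk a b), P.length = Γ.dist a b →
      ∀ w ∈ P.support, ∀ u : V, Γ.dist u a ≤ k →
      ∃ Q : Γ.Walk u b, Q.length = Γ.dist u b ∧ ∃ v ∈ Q.support, Γ.dist w v ≤ β * k := by
  intro k
  induction k with
  | zero =>
    intro a b P hP w hw u hu
    have hua : u = a := hconn.dist_eq_zero_iff.mp (by omega)
    subst hua
    exact ⟨P, hP, w, hw, by simp [SimpleGraph.dist_self]⟩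
  | succ k ih =>
    intro a b P hP w hw u hu
    by_cases hk : Γ.dist u a ≤ k
    · obtain ⟨Q, hQ, v, hv, hd⟩ := ih P hP w hw u hk
      exact ⟨Q, hQ, v, hv, hd.trans (Nat.mul_le_mul_left β (Nat.le_succ k))⟩
    · have hua : Γ.dist u a = k + 1 := by omega
      obtain ⟨W, hW⟩ := exists_geodesic hconn u a
      have h1len : 1 ≤ W.length := by omega
      obtain ⟨huu', hu'a⟩ := geodesic_getVert hconn W hW h1len
      have hu'a' : Γ.dist (W.getVert 1) a ≤ k := by omega
      obtain ⟨Q', hQ', v', hv', hd'⟩ := ih P hP w hw (W.getVert 1) hu'a'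
      obtain ⟨Q, hQ, v, hv, hd⟩ := hstable Q' hQ' v' hv' u huu'
      refine ⟨Q, hQ, v, hv, ?_⟩
      have h1 : Γ.dist w v ≤ Γ.dist w v' + Γ.dist v' v := hconn.dist_triangle
      have h2 : β * (k + 1) = β * k + β := by ring
      omega

/-- Sub-lemma C : corridor lemma. If w has positive defect w.r.t. (a,b), there are
adjacent y, z with w on a geodesic from a to y, and z of strictly smaller defect. -/
lemma corridor (hconn : Γ.Connected) :
    ∀ m : ℕ, ∀ w a b : V, Γ.dist w b ≤ m →
      Γ.dist a b + 1 ≤ Γ.dist a w + Γ.dist w b →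
      ∃ y z : V, Γ.dist a w + Γ.dist w y = Γ.dist a y ∧ Γ.dist y z = 1 ∧
        Γ.dist a z + Γ.dist z b + 1 ≤ Γ.dist a w + Γ.dist w b := by
  intro m
  induction m with
  | zero =>
    intro w a b hm hdef
    have : w = b := hconn.dist_eq_zero_iff.mp (by omega)
    subst this
    rw [SimpleGraph.dist_self] at hdef
    omega
  | succ m ih =>
    intro w a b hm hdef
    by_cases hwb : Γ.dist w b = 0
    · have : w = b := hconn.dist_eq_zero_iff.mp hwb
      subst this
      rw [SimpleGraph.dist_self] at hdef
      omega
    · obtain ⟨S, hS⟩ := exists_geodesic hconn w b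
      have h1len : 1 ≤ S.length := by omega
      obtain ⟨hws, hsb⟩ := geodesic_getVert hconn S hS h1len
      rw [hS] at hsb
      by_cases hcase : Γ.dist a (S.getVert 1) + Γ.dist (S.getVert 1) b + 1 ≤
          Γ.dist a w + Γ.dist w b
      · exact ⟨w, S.getVert 1, by simp [SimpleGraph.dist_self], hws, hcase⟩
      · push_neg at hcase
        have htri : Γ.dist a (S.getVert 1) ≤ Γ.dist a w + Γ.dist w (S.getVert 1) :=
          hconn.dist_triangle
        have hdefs : Γ.dist a b + 1 ≤ Γ.dist a (S.getVert 1) + Γ.dist (S.getVert 1) b := by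
          omega
        have hsm : Γ.dist (S.getVert 1) b ≤ m := by omega
        obtain ⟨y, z, hy1, hy2, hy3⟩ := ih (S.getVert 1) a b hsm hdefs
        refine ⟨y, z, ?_, hy2, by omega⟩
        have t1 : Γ.dist a y ≤ Γ.dist a w + Γ.dist w y := hconn.dist_triangle
        have t2 : Γ.dist w y ≤ Γ.dist w (S.getVert 1) + Γ.dist (S.getVert 1) y :=
          hconn.dist_triangle
        omega

/-- Lemma B : a point of defect ≤ δ w.r.t. (a,b) is within β·δ of some geodesic
from a to b. -/
lemma near_geodesic (hconn : Γ.Connected) (hstable : HasStableIntervals Γ β) :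
    ∀ δ : ℕ, ∀ w a b : V, Γ.dist a w + Γ.dist w b ≤ Γ.dist a b + δ →
      ∃ G0 : Γ.Walk a b, G0.length = Γ.dist a b ∧
        ∃ v ∈ G0.support, Γ.dist w v ≤ β * δ := by
  classical
  intro δ
  induction δ with
  | zero =>
    intro w a b hdef
    have htri : Γ.dist a b ≤ Γ.dist a w + Γ.dist w b := hconn.dist_triangle
    have h0 : Γ.dist a w + Γ.dist w b = Γ.dist a b := by omega
    obtain ⟨W1, hW1⟩ := exists_geodesic hconn a w
    obtain ⟨W2, hW2⟩ := exists_geodesic hconn w b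
    refine ⟨W1.append W2, ?_, w, ?_, by simp [SimpleGraph.dist_self]⟩
    · rw [Walk.length_append, hW1, hW2, h0]
    · exact Walk.subset_support_append_left _ _ W1.end_mem_support
  | succ δ ih =>
    intro w a b hdef
    by_cases hle : Γ.dist a w + Γ.dist w b ≤ Γ.dist a b + δ
    · obtain ⟨G0, hG0, v, hv, hd⟩ := ih w a b hle
      exact ⟨G0, hG0, v, hv, hd.trans (Nat.mul_le_mul_left β (Nat.le_succ δ))⟩
    · push_neg at hle
      have hdef1 : Γ.dist a b + 1 ≤ Γ.dist a w + Γ.dist w b := by omega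
      obtain ⟨y, z, hy1, hy2, hy3⟩ := corridor hconn (Γ.dist w b) w a b le_rfl hdef1
      -- build a geodesic from y to a through w
      obtain ⟨W1, hW1⟩ := exists_geodesic hconn y w
      obtain ⟨W2, hW2⟩ := exists_geodesic hconn w a
      have c1 : Γ.dist y w = Γ.dist w y := SimpleGraph.dist_comm
      have c2 : Γ.dist w a = Γ.dist a w := SimpleGraph.dist_comm
      have c3 : Γ.dist y a = Γ.dist a y := SimpleGraph.dist_comm
      have hyw : Γ.dist y w + Γ.dist w a = Γ.dist y a := by omega
      have hWlen : (W1.append W2).length = Γ.dist y a := by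
        rw [Walk.length_append, hW1, hW2, hyw]
      have hwmem : w ∈ (W1.append W2).support :=
        Walk.subset_support_append_left _ _ W1.end_mem_support
      have hzy : Γ.dist z y = 1 := by rw [SimpleGraph.dist_comm]; exact hy2
      obtain ⟨R, hR, v₀, hv₀, hd₀⟩ := hstable (W1.append W2) hWlen w hwmem z hzy
      -- v₀ splits the geodesic R from z to a
      obtain ⟨hsplit, -⟩ := geodesic_split hconn R hR hv₀
      -- defect of v₀ is at most δ
      have hv₀b : Γ.dist v₀ b ≤ Γ.dist v₀ z + Γ.dist z b := hconn.dist_triangle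
      have c4 : Γ.dist a v₀ = Γ.dist v₀ a := SimpleGraph.dist_comm
      have c5 : Γ.dist v₀ z = Γ.dist z v₀ := SimpleGraph.dist_comm
      have c6 : Γ.dist a z = Γ.dist z a := SimpleGraph.dist_comm
      have hdefv₀ : Γ.dist a v₀ + Γ.dist v₀ b ≤ Γ.dist a b + δ := by omega
      obtain ⟨G0, hG0, v, hv, hd⟩ := ih v₀ a b hdefv₀
      refine ⟨G0, hG0, v, hv, ?_⟩
      have htri : Γ.dist w v ≤ Γ.dist w v₀ + Γ.dist v₀ v := hconn.dist_triangle
      have h2 : β * (δ + 1) = β * δ + β := by ring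
      omega

end Stable

end StableAux

open StableAux in
theorem stmt5 {V : Type*} (Γ : SimpleGraph V) (hconn : Γ.Connected)
    (β : ℕ) (hβ : 1 ≤ β) (hstable : HasStableIntervals Γ β)
    (N : ℕ) (hN : 1 ≤ N) :
    HasStableIntervals (rips Γ N) (3 * β + 1) := by
  classical
  have hconnN : (rips Γ N).Connected := rips_connected hconn hN
  intro a b P hP w hw u hu
  -- u is adjacent to a in the rips graph
  have hadj : (rips Γ N).Adj u a := SimpleGraph.dist_eq_one_iff_adj.mp hu
  have hua : Γ.dist u a ≤ N := hadj.2
  -- split the rips geodesic P at w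
  obtain ⟨hsplitN, -⟩ := geodesic_split hconnN P hP hw
  by_cases hi0 : (rips Γ N).dist a w = 0
  · -- w = a ; take any geodesic from u to b and v := u
    have hwa : a = w := hconnN.dist_eq_zero_iff.mp hi0
    obtain ⟨Q, hQ⟩ := exists_geodesic hconnN u b
    refine ⟨Q, hQ, u, Q.start_mem_support, ?_⟩
    rw [← hwa, SimpleGraph.dist_comm]
    omega
  · -- main case
    have haw : Γ.dist a w ≤ N * (rips Γ N).dist a w := dist_le_N_mul hconn hN a w
    have hwb : Γ.dist w b ≤ N * (rips Γ N).dist w b := dist_le_N_mul hconn hN w b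
    -- lower bound on Γ.dist a b
    have hDlb : N * ((rips Γ N).dist a w + (rips Γ N).dist w b - 1) + 1 ≤ Γ.dist a b := by
      by_contra hcon
      push_neg at hcon
      have hc : ((rips Γ N).dist a w + (rips Γ N).dist w b - 1) * N =
          N * ((rips Γ N).dist a w + (rips Γ N).dist w b - 1) := Nat.mul_comm _ _
      have := rips_dist_le hconn hN ((rips Γ N).dist a w + (rips Γ N).dist w b - 1) a b
        (by omega)
      omega
    -- defect of w w.r.t. (a, b) is at most N - 1
    have hmul : N * (rips Γ N).dist a w + N * (rips Γ N).dist w b =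
        N * ((rips Γ N).dist a w + (rips Γ N).dist w b - 1) + N := by
      rw [← Nat.mul_succ, ← Nat.mul_add]
      congr 1
      omega
    have hdef : Γ.dist a w + Γ.dist w b ≤ Γ.dist a b + (N - 1) := by omega
    obtain ⟨G0, hG0, v₀, hv₀, hd₀⟩ := near_geodesic hconn hstable (N - 1) w a b hdef
    obtain ⟨R, hR, v₁, hv₁, hd₁⟩ := stable_iter hconn hstable N G0 hG0 v₀ hv₀ u hua
    -- pick the vertex v on R at position N * (s / N) where s is the position of v₁
    obtain ⟨hsplitR, hlenR1⟩ := geodesic_split hconn R hR hv₁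
    have hR₁len : (R.takeUntil v₁ hv₁).length = Γ.dist u v₁ := hlenR1.symm
    have hts : N * (Γ.dist u v₁ / N) + Γ.dist u v₁ % N = Γ.dist u v₁ :=
      Nat.div_add_mod _ N
    have hst : N * (Γ.dist u v₁ / N) ≤ Γ.dist u v₁ := by omega
    have hmod : Γ.dist u v₁ % N < N := Nat.mod_lt _ (by omega)
    have hk : N * (Γ.dist u v₁ / N) ≤ (R.takeUntil v₁ hv₁).length := by omega
    obtain ⟨huv, hvv₁⟩ := geodesic_getVert hconn (R.takeUntil v₁ hv₁) hR₁len hk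
    rw [hR₁len] at hvv₁
    set v := (R.takeUntil v₁ hv₁).getVert (N * (Γ.dist u v₁ / N)) with hvdef
    -- Γ-distances from v
    have hvb_le : Γ.dist v b ≤ Γ.dist v v₁ + Γ.dist v₁ b := hconn.dist_triangle
    have hvb_ge : Γ.dist u b ≤ Γ.dist u v + Γ.dist v b := hconn.dist_triangle
    have hvb : Γ.dist u v + Γ.dist v b = Γ.dist u b := by omega
    -- rips distances
    have hmN : Γ.dist u b ≤ N * (rips Γ N).dist u b := dist_le_N_mul hconn hN u b
    have hk₀n : Γ.dist u v₁ / N ≤ (rips Γ N).dist u b := by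
      refine Nat.le_of_mul_le_mul_left ?_ (show 0 < N by omega)
      omega
    have hduv : (rips Γ N).dist u v ≤ Γ.dist u v₁ / N := by
      apply rips_dist_le hconn hN _ u v
      rw [Nat.mul_comm]
      omega
    have hdvb : (rips Γ N).dist v b ≤ (rips Γ N).dist u b - Γ.dist u v₁ / N := by
      apply rips_dist_le hconn hN _ v b
      have hms : ((rips Γ N).dist u b - Γ.dist u v₁ / N) * N =
          N * (rips Γ N).dist u b - N * (Γ.dist u v₁ / N) := by
        rw [Nat.mul_comm, Nat.mul_sub]
      omega
    -- build the rips geodesic Q through v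
    obtain ⟨W1, hW1⟩ := exists_geodesic hconnN u v
    obtain ⟨W2, hW2⟩ := exists_geodesic hconnN v b
    have hQlen : (W1.append W2).length = (rips Γ N).dist u b := by
      have hge : (rips Γ N).dist u b ≤ (W1.append W2).length := SimpleGraph.dist_le _
      rw [Walk.length_append, hW1, hW2] at hge ⊢
      omega
    refine ⟨W1.append W2, hQlen, v, Walk.subset_support_append_left _ _ W1.end_mem_support, ?_⟩
    -- final distance estimate
    have ht1 : Γ.dist w v ≤ Γ.dist w v₀ + Γ.dist v₀ v := hconn.dist_triangle
    have ht2 : Γ.dist v₀ v ≤ Γ.dist v₀ v₁ + Γ.dist v₁ v := hconn.dist_triangle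
    have ht3 : Γ.dist v₁ v = Γ.dist v v₁ := SimpleGraph.dist_comm
    apply rips_dist_le hconn hN (3 * β + 1) w v
    have e1 : β * (N - 1) ≤ β * N := Nat.mul_le_mul_left β (Nat.sub_le N 1)
    have e2 : (3 * β + 1) * N = β * N + β * N + (β * N + N) := by ring
    have e3 : N ≤ β * N := Nat.le_mul_of_pos_left N (by omega)
    omega
end

section
/- A connected graph Γ is pseudo-modular if and only if every triple of pairwise intersecting balls B_{ρ_1}(x_1), B_{ρ_2}(x_2), B_{ρ_3}(x_3) in Γ has nonempty total intersection. -/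
open SimpleGraph

/-- A connected graph is pseudo-modular if every triple of vertices `w₁, w₂, w₃` admits
"median-like" vertices `m₁, m₂, m₃` with equal pairwise distances at most `1`, such that
for each `i` the concatenation of a geodesic from `wᵢ` to `mᵢ`, a path of length
`d(mᵢ, mᵢ₊₁)` and a reversed geodesic from `wᵢ₊₁` to `mᵢ₊₁` is a geodesic from `wᵢ` to
`wᵢ₊₁` (expressed below via the corresponding length equalities). -/
def PseudoModular {V : Type*} (G : SimpleGraph V) : Prop :=
  ∀ w₁ w₂ w₃ : V, ∃ m₁ m₂ m₃ : V,
    G.dist m₁ m₂ ≤ 1 ∧ G.dist m₁ m₂ = G.dist m₂ m₃ ∧ G.dist m₂ m₃ = G.dist m₃ m₁ ∧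
    G.dist w₁ m₁ + G.dist m₁ m₂ + G.dist m₂ w₂ = G.dist w₁ w₂ ∧
    G.dist w₂ m₂ + G.dist m₂ m₃ + G.dist m₃ w₃ = G.dist w₂ w₃ ∧
    G.dist w₃ m₃ + G.dist m₃ m₁ + G.dist m₁ w₁ = G.dist w₃ w₁

section Aux

variable {V : Type*} {G : SimpleGraph V}

/-- Step one vertex along a geodesic. -/
lemma my_step_lemma (hconn : G.Connected) {p v : V} (h : 0 < G.dist p v) :
    ∃ q : V, G.dist p q ≤ 1 ∧ G.dist q v = G.dist p v - 1 := by
  obtain ⟨w, hw⟩ := hconn.exists_walk_length_eq_dist p v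
  cases w with
  | nil => simp at hw; rw [SimpleGraph.dist_self] at h; omega
  | @cons _ x _ hadj w' =>
    refine ⟨x, ?_, ?_⟩
    · have := SimpleGraph.dist_le hadj.toWalk
      simpa using this
    · have h1 : G.dist x v ≤ w'.length := SimpleGraph.dist_le w'
      have h2 : G.dist p v ≤ G.dist p x + G.dist x v := hconn.dist_triangle
      have h3 : G.dist p x ≤ 1 := by
        have := SimpleGraph.dist_le hadj.toWalk
        simpa using this
      simp only [SimpleGraph.Walk.length_cons] at hw
      omega

/-- Existence of intermediate points on geodesics. -/
lemma my_dist_split (hconn : G.Connected) (u v : V) (k : ℕ) (hk : k ≤ G.dist u v) :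
    ∃ p : V, G.dist u p = k ∧ G.dist p v = G.dist u v - k := by
  induction k with
  | zero => exact ⟨u, SimpleGraph.dist_self, by simp⟩
  | succ n ih =>
    obtain ⟨p, hup, hpv⟩ := ih (by omega)
    obtain ⟨q, hpq, hqv⟩ := my_step_lemma hconn (p := p) (v := v) (by omega)
    have t1 : G.dist u q ≤ G.dist u p + G.dist p q := hconn.dist_triangle
    have t2 : G.dist u v ≤ G.dist u q + G.dist q v := hconn.dist_triangle
    exact ⟨q, by omega, by omega⟩

/-- The Helly property for triples of balls. -/
def HellyProp {V : Type*} (Γ : SimpleGraph V) : Prop :=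
  ∀ (x₁ x₂ x₃ : V) (ρ₁ ρ₂ ρ₃ : ℕ),
    (gball Γ x₁ ρ₁ ∩ gball Γ x₂ ρ₂).Nonempty →
    (gball Γ x₂ ρ₂ ∩ gball Γ x₃ ρ₃).Nonempty →
    (gball Γ x₁ ρ₁ ∩ gball Γ x₃ ρ₃).Nonempty →
    (gball Γ x₁ ρ₁ ∩ gball Γ x₂ ρ₂ ∩ gball Γ x₃ ρ₃).Nonempty

/-- In a graph with the Helly property for balls, the two sides of a metric triangle
at a vertex nearly bound the opposite side from below. -/
lemma my_mt_side (hconn : G.Connected) (hH : HellyProp G) (u v w : V)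
    (hmt : ∀ x, G.dist u x + G.dist x v = G.dist u v →
      G.dist u x + G.dist x w = G.dist u w → x = u)
    (hv : 1 ≤ G.dist u v) (hw : 1 ≤ G.dist u w) :
    G.dist u v + G.dist u w ≤ G.dist v w + 1 := by
  by_contra hcon
  push_neg at hcon
  obtain ⟨q1, hq1a, hq1b⟩ := my_dist_split hconn u v 1 hv
  obtain ⟨q2, hq2a, hq2b⟩ := my_dist_split hconn u w 1 hw
  obtain ⟨q3, hq3a, hq3b⟩ :=
    my_dist_split hconn v w (min (G.dist u v - 1) (G.dist v w)) (min_le_right _ _)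
  have ne12 : (gball G u 1 ∩ gball G v (G.dist u v - 1)).Nonempty := by
    refine ⟨q1, ?_, ?_⟩ <;> simp only [gball, Set.mem_setOf_eq]
    · rw [SimpleGraph.dist_comm]; omega
    · omega
  have ne23 : (gball G v (G.dist u v - 1) ∩ gball G w (G.dist u w - 1)).Nonempty := by
    refine ⟨q3, ?_, ?_⟩ <;> simp only [gball, Set.mem_setOf_eq]
    · rw [SimpleGraph.dist_comm]; omega
    · omega
  have ne13 : (gball G u 1 ∩ gball G w (G.dist u w - 1)).Nonempty := by
    refine ⟨q2, ?_, ?_⟩ <;> simp only [gball, Set.mem_setOf_eq]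
    · rw [SimpleGraph.dist_comm]; omega
    · omega
  obtain ⟨x, ⟨hx1, hx2⟩, hx3⟩ := hH u v w 1 (G.dist u v - 1) (G.dist u w - 1) ne12 ne23 ne13
  simp only [gball, Set.mem_setOf_eq] at hx1 hx2 hx3
  have cxu : G.dist x u = G.dist u x := SimpleGraph.dist_comm
  have t1 : G.dist u v ≤ G.dist u x + G.dist x v := hconn.dist_triangle
  have t2 : G.dist u w ≤ G.dist u x + G.dist x w := hconn.dist_triangle
  have hx := hmt x (by omega) (by omega)
  subst hx
  rw [SimpleGraph.dist_self] at cxu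
  omega

/-- Degenerate metric triangles collapse. -/
lemma my_mt_deg (hconn : G.Connected) (u v : V)
    (hmt : ∀ x, G.dist u x + G.dist x v = G.dist u v → x = u) :
    G.dist u v = 0 := by
  by_contra h
  obtain ⟨q, hq1, hq2⟩ := my_dist_split hconn u v 1 (by omega)
  have hqu := hmt q (by omega)
  subst hqu
  rw [SimpleGraph.dist_self] at hq1
  omega

/-- Helly property for balls implies pseudo-modularity (via quasi-medians). -/
lemma my_helly_to_pm (hconn : G.Connected) (hH : HellyProp G) : PseudoModular G := by
  classical
  intro w₁ w₂ w₃
  -- Step 1: m₁ ∈ I(w₁,w₂) ∩ I(w₁,w₃) farthest from w₁.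
  set P₁ : ℕ → Prop := fun k => ∃ x, G.dist w₁ x = k ∧
      G.dist w₁ x + G.dist x w₂ = G.dist w₁ w₂ ∧
      G.dist w₁ x + G.dist x w₃ = G.dist w₁ w₃ with hP₁def
  have hP₁0 : P₁ 0 := ⟨w₁, SimpleGraph.dist_self, by simp [SimpleGraph.dist_self], by
    simp [SimpleGraph.dist_self]⟩
  obtain ⟨m₁, hm₁k, h1a, h1b⟩ :=
    Nat.findGreatest_spec (P := P₁) (Nat.zero_le (G.dist w₁ w₂)) hP₁0
  have max1 : ∀ x, G.dist w₁ x + G.dist x w₂ = G.dist w₁ w₂ →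
      G.dist w₁ x + G.dist x w₃ = G.dist w₁ w₃ → G.dist w₁ x ≤ G.dist w₁ m₁ := by
    intro x hx hx'
    rw [hm₁k]
    exact Nat.le_findGreatest (by omega) ⟨x, rfl, hx, hx'⟩
  clear hm₁k
  -- Step 2: m₂ ∈ I(w₂,m₁) ∩ I(w₂,w₃) farthest from w₂.
  set P₂ : ℕ → Prop := fun k => ∃ x, G.dist w₂ x = k ∧
      G.dist w₂ x + G.dist x m₁ = G.dist w₂ m₁ ∧
      G.dist w₂ x + G.dist x w₃ = G.dist w₂ w₃ with hP₂def
  have hP₂0 : P₂ 0 := ⟨w₂, SimpleGraph.dist_self, by simp [SimpleGraph.dist_self], by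
    simp [SimpleGraph.dist_self]⟩
  obtain ⟨m₂, hm₂k, h2a, h2b⟩ :=
    Nat.findGreatest_spec (P := P₂) (Nat.zero_le (G.dist w₂ m₁)) hP₂0
  have max2 : ∀ x, G.dist w₂ x + G.dist x m₁ = G.dist w₂ m₁ →
      G.dist w₂ x + G.dist x w₃ = G.dist w₂ w₃ → G.dist w₂ x ≤ G.dist w₂ m₂ := by
    intro x hx hx'
    rw [hm₂k]
    exact Nat.le_findGreatest (by omega) ⟨x, rfl, hx, hx'⟩
  clear hm₂k
  -- Step 3: m₃ ∈ I(w₃,m₁) ∩ I(w₃,m₂) farthest from w₃.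
  set P₃ : ℕ → Prop := fun k => ∃ x, G.dist w₃ x = k ∧
      G.dist w₃ x + G.dist x m₁ = G.dist w₃ m₁ ∧
      G.dist w₃ x + G.dist x m₂ = G.dist w₃ m₂ with hP₃def
  have hP₃0 : P₃ 0 := ⟨w₃, SimpleGraph.dist_self, by simp [SimpleGraph.dist_self], by
    simp [SimpleGraph.dist_self]⟩
  obtain ⟨m₃, hm₃k, h3a, h3b⟩ :=
    Nat.findGreatest_spec (P := P₃) (Nat.zero_le (G.dist w₃ m₁)) hP₃0
  have max3 : ∀ x, G.dist w₃ x + G.dist x m₁ = G.dist w₃ m₁ →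
      G.dist w₃ x + G.dist x m₂ = G.dist w₃ m₂ → G.dist w₃ x ≤ G.dist w₃ m₃ := by
    intro x hx hx'
    rw [hm₃k]
    exact Nat.le_findGreatest (by omega) ⟨x, rfl, hx, hx'⟩
  clear hm₃k
  -- commutation facts
  have c1 : G.dist m₂ m₁ = G.dist m₁ m₂ := SimpleGraph.dist_comm
  have c2 : G.dist m₃ m₁ = G.dist m₁ m₃ := SimpleGraph.dist_comm
  have c3 : G.dist m₃ m₂ = G.dist m₂ m₃ := SimpleGraph.dist_comm
  have c4 : G.dist w₂ m₁ = G.dist m₁ w₂ := SimpleGraph.dist_comm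
  have c5 : G.dist w₃ m₁ = G.dist m₁ w₃ := SimpleGraph.dist_comm
  have c6 : G.dist w₃ m₂ = G.dist m₂ w₃ := SimpleGraph.dist_comm
  have c7 : G.dist w₂ m₂ = G.dist m₂ w₂ := SimpleGraph.dist_comm
  have c8 : G.dist w₃ m₃ = G.dist m₃ w₃ := SimpleGraph.dist_comm
  have c9 : G.dist w₃ w₁ = G.dist w₁ w₃ := SimpleGraph.dist_comm
  have c10 : G.dist m₁ w₁ = G.dist w₁ m₁ := SimpleGraph.dist_comm
  -- metric triangle conditions
  have MT1 : ∀ x, G.dist m₁ x + G.dist x m₂ = G.dist m₁ m₂ →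
      G.dist m₁ x + G.dist x m₃ = G.dist m₁ m₃ → x = m₁ := by
    intro x hA hB
    have t1 : G.dist w₁ x ≤ G.dist w₁ m₁ + G.dist m₁ x := hconn.dist_triangle
    have t2 : G.dist x w₂ ≤ G.dist x m₂ + G.dist m₂ w₂ := hconn.dist_triangle
    have t3 : G.dist x w₃ ≤ G.dist x m₃ + G.dist m₃ w₃ := hconn.dist_triangle
    have t4 : G.dist w₁ w₂ ≤ G.dist w₁ x + G.dist x w₂ := hconn.dist_triangle
    have t5 : G.dist w₁ w₃ ≤ G.dist w₁ x + G.dist x w₃ := hconn.dist_triangle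
    have hmax := max1 x (by omega) (by omega)
    have hz : G.dist m₁ x = 0 := by omega
    exact ((hconn.dist_eq_zero_iff).mp hz).symm
  have MT2 : ∀ x, G.dist m₂ x + G.dist x m₁ = G.dist m₂ m₁ →
      G.dist m₂ x + G.dist x m₃ = G.dist m₂ m₃ → x = m₂ := by
    intro x hA hB
    have t1 : G.dist w₂ x ≤ G.dist w₂ m₂ + G.dist m₂ x := hconn.dist_triangle
    have t2 : G.dist x m₁ ≤ G.dist x m₁ := le_rfl
    have t3 : G.dist x w₃ ≤ G.dist x m₃ + G.dist m₃ w₃ := hconn.dist_triangle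
    have t4 : G.dist w₂ m₁ ≤ G.dist w₂ x + G.dist x m₁ := hconn.dist_triangle
    have t5 : G.dist w₂ w₃ ≤ G.dist w₂ x + G.dist x w₃ := hconn.dist_triangle
    have hmax := max2 x (by omega) (by omega)
    have hz : G.dist m₂ x = 0 := by omega
    exact ((hconn.dist_eq_zero_iff).mp hz).symm
  have MT3 : ∀ x, G.dist m₃ x + G.dist x m₁ = G.dist m₃ m₁ →
      G.dist m₃ x + G.dist x m₂ = G.dist m₃ m₂ → x = m₃ := by
    intro x hA hB
    have t1 : G.dist w₃ x ≤ G.dist w₃ m₃ + G.dist m₃ x := hconn.dist_triangle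
    have t4 : G.dist w₃ m₁ ≤ G.dist w₃ x + G.dist x m₁ := hconn.dist_triangle
    have t5 : G.dist w₃ m₂ ≤ G.dist w₃ x + G.dist x m₂ := hconn.dist_triangle
    have hmax := max3 x (by omega) (by omega)
    have hz : G.dist m₃ x = 0 := by omega
    exact ((hconn.dist_eq_zero_iff).mp hz).symm
  -- degenerate cases
  have f1 : G.dist m₂ m₃ = 0 → G.dist m₃ m₁ = G.dist m₁ m₂ ∧ G.dist m₁ m₂ = 0 := by
    intro h0
    have h23 : m₂ = m₃ := (hconn.dist_eq_zero_iff).mp h0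
    subst h23
    refine ⟨by omega, ?_⟩
    exact my_mt_deg hconn m₁ m₂ (fun x hx => MT1 x hx hx)
  have f2 : G.dist m₁ m₂ = 0 → G.dist m₂ m₃ = G.dist m₃ m₁ ∧ G.dist m₃ m₁ = 0 := by
    intro h0
    have h12 : m₁ = m₂ := (hconn.dist_eq_zero_iff).mp h0
    subst h12
    refine ⟨by omega, ?_⟩
    have := my_mt_deg hconn m₃ m₁ (fun x hx => MT3 x hx hx)
    omega
  have f3 : G.dist m₃ m₁ = 0 → G.dist m₂ m₃ = G.dist m₁ m₂ ∧ G.dist m₁ m₂ = 0 := by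
    intro h0
    have h31 : m₃ = m₁ := (hconn.dist_eq_zero_iff).mp h0
    subst h31
    refine ⟨by omega, ?_⟩
    have := my_mt_deg hconn m₂ m₃ (fun x hx => MT2 x hx hx)
    omega
  -- nondegenerate Helly bounds
  have g1 : 1 ≤ G.dist m₁ m₂ → 1 ≤ G.dist m₁ m₃ →
      G.dist m₁ m₂ + G.dist m₁ m₃ ≤ G.dist m₂ m₃ + 1 :=
    my_mt_side hconn hH m₁ m₂ m₃ MT1
  have g2 : 1 ≤ G.dist m₂ m₁ → 1 ≤ G.dist m₂ m₃ →
      G.dist m₂ m₁ + G.dist m₂ m₃ ≤ G.dist m₁ m₃ + 1 :=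
    my_mt_side hconn hH m₂ m₁ m₃ MT2
  have g3 : 1 ≤ G.dist m₃ m₁ → 1 ≤ G.dist m₃ m₂ →
      G.dist m₃ m₁ + G.dist m₃ m₂ ≤ G.dist m₁ m₂ + 1 :=
    my_mt_side hconn hH m₃ m₁ m₂ MT3
  have key : G.dist m₁ m₂ ≤ 1 ∧ G.dist m₁ m₂ = G.dist m₂ m₃ ∧
      G.dist m₂ m₃ = G.dist m₃ m₁ := by omega
  exact ⟨m₁, m₂, m₃, key.1, key.2.1, key.2.2, by omega, by omega, by omega⟩

/-- The key computation in the forward direction, stated for a chosen index. -/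
lemma my_pm_helper (hconn : G.Connected)
    (x₁ x₂ x₃ m₁ m₂ m₃ : V) (ρ₁ ρ₂ ρ₃ t : ℕ) (ht : t ≤ 1)
    (hd2 : G.dist m₁ m₂ ≤ t) (hd3 : G.dist m₁ m₃ ≤ t)
    (h12 : G.dist x₁ m₁ + t + G.dist x₂ m₂ ≤ ρ₁ + ρ₂)
    (h13 : G.dist x₁ m₁ + t + G.dist x₃ m₃ ≤ ρ₁ + ρ₃)
    (hmin2 : (G.dist x₂ m₂ : ℤ) - ρ₂ ≤ (G.dist x₁ m₁ : ℤ) - ρ₁)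
    (hmin3 : (G.dist x₃ m₃ : ℤ) - ρ₃ ≤ (G.dist x₁ m₁ : ℤ) - ρ₁) :
    ∃ p : V, G.dist p x₁ ≤ ρ₁ ∧ G.dist p x₂ ≤ ρ₂ ∧ G.dist p x₃ ≤ ρ₃ := by
  obtain ⟨p, hp1, hp2⟩ :=
    my_dist_split hconn x₁ m₁ (min (G.dist x₁ m₁) ρ₁) (min_le_left _ _)
  have cpx : G.dist p x₁ = G.dist x₁ p := SimpleGraph.dist_comm
  have cx2 : G.dist m₂ x₂ = G.dist x₂ m₂ := SimpleGraph.dist_comm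
  have cx3 : G.dist m₃ x₃ = G.dist x₃ m₃ := SimpleGraph.dist_comm
  have t2a : G.dist p x₂ ≤ G.dist p m₁ + G.dist m₁ x₂ := hconn.dist_triangle
  have t2b : G.dist m₁ x₂ ≤ G.dist m₁ m₂ + G.dist m₂ x₂ := hconn.dist_triangle
  have t3a : G.dist p x₃ ≤ G.dist p m₁ + G.dist m₁ x₃ := hconn.dist_triangle
  have t3b : G.dist m₁ x₃ ≤ G.dist m₁ m₃ + G.dist m₃ x₃ := hconn.dist_triangle
  exact ⟨p, by omega, by omega, by omega⟩

end Aux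

theorem stmt10 {V : Type*} (Γ : SimpleGraph V) (hconn : Γ.Connected) :
    PseudoModular Γ ↔
      ∀ (x₁ x₂ x₃ : V) (ρ₁ ρ₂ ρ₃ : ℕ),
        (gball Γ x₁ ρ₁ ∩ gball Γ x₂ ρ₂).Nonempty →
        (gball Γ x₂ ρ₂ ∩ gball Γ x₃ ρ₃).Nonempty →
        (gball Γ x₁ ρ₁ ∩ gball Γ x₃ ρ₃).Nonempty →
        (gball Γ x₁ ρ₁ ∩ gball Γ x₂ ρ₂ ∩ gball Γ x₃ ρ₃).Nonempty := by
  constructor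
  · intro hpm x₁ x₂ x₃ ρ₁ ρ₂ ρ₃ h12 h23 h13
    obtain ⟨p12, hp12a, hp12b⟩ := h12
    obtain ⟨p23, hp23a, hp23b⟩ := h23
    obtain ⟨p13, hp13a, hp13b⟩ := h13
    simp only [gball, Set.mem_setOf_eq] at hp12a hp12b hp23a hp23b hp13a hp13b
    have d12 : Γ.dist x₁ x₂ ≤ ρ₁ + ρ₂ := by
      have t : Γ.dist x₁ x₂ ≤ Γ.dist x₁ p12 + Γ.dist p12 x₂ := hconn.dist_triangle
      have c : Γ.dist x₁ p12 = Γ.dist p12 x₁ := SimpleGraph.dist_comm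
      omega
    have d23 : Γ.dist x₂ x₃ ≤ ρ₂ + ρ₃ := by
      have t : Γ.dist x₂ x₃ ≤ Γ.dist x₂ p23 + Γ.dist p23 x₃ := hconn.dist_triangle
      have c : Γ.dist x₂ p23 = Γ.dist p23 x₂ := SimpleGraph.dist_comm
      omega
    have d31 : Γ.dist x₃ x₁ ≤ ρ₃ + ρ₁ := by
      have t : Γ.dist x₃ x₁ ≤ Γ.dist x₃ p13 + Γ.dist p13 x₁ := hconn.dist_triangle
      have c : Γ.dist x₃ p13 = Γ.dist p13 x₃ := SimpleGraph.dist_comm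
      omega
    obtain ⟨m₁, m₂, m₃, ht1, he1, he2, hg1, hg2, hg3⟩ := hpm x₁ x₂ x₃
    -- abbreviations and commutation facts
    have c1 : Γ.dist m₂ x₂ = Γ.dist x₂ m₂ := SimpleGraph.dist_comm
    have c2 : Γ.dist m₃ x₃ = Γ.dist x₃ m₃ := SimpleGraph.dist_comm
    have c3 : Γ.dist m₁ x₁ = Γ.dist x₁ m₁ := SimpleGraph.dist_comm
    have c4 : Γ.dist m₂ m₁ = Γ.dist m₁ m₂ := SimpleGraph.dist_comm
    have c5 : Γ.dist m₃ m₁ = Γ.dist m₁ m₃ := SimpleGraph.dist_comm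
    have c6 : Γ.dist m₃ m₂ = Γ.dist m₂ m₃ := SimpleGraph.dist_comm
    have c7 : Γ.dist m₁ m₃ = Γ.dist m₃ m₁ := SimpleGraph.dist_comm
    set t := Γ.dist m₁ m₂ with hts
    have finish : ∀ p : V, Γ.dist p x₁ ≤ ρ₁ → Γ.dist p x₂ ≤ ρ₂ → Γ.dist p x₃ ≤ ρ₃ →
        (gball Γ x₁ ρ₁ ∩ gball Γ x₂ ρ₂ ∩ gball Γ x₃ ρ₃).Nonempty := by
      intro p h1 h2 h3
      exact ⟨p, ⟨h1, h2⟩, h3⟩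
    have H12 : Γ.dist x₁ m₁ + t + Γ.dist x₂ m₂ ≤ ρ₁ + ρ₂ := by omega
    have H23 : Γ.dist x₂ m₂ + t + Γ.dist x₃ m₃ ≤ ρ₂ + ρ₃ := by omega
    have H31 : Γ.dist x₃ m₃ + t + Γ.dist x₁ m₁ ≤ ρ₃ + ρ₁ := by omega
    rcases le_total ((Γ.dist x₁ m₁ : ℤ) - ρ₁) ((Γ.dist x₂ m₂ : ℤ) - ρ₂) with hA | hA
    · rcases le_total ((Γ.dist x₂ m₂ : ℤ) - ρ₂) ((Γ.dist x₃ m₃ : ℤ) - ρ₃) with hB | hB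
      · obtain ⟨p, h3, h1, h2⟩ := my_pm_helper hconn x₃ x₁ x₂ m₃ m₁ m₂ ρ₃ ρ₁ ρ₂ t ht1
          (by omega) (by omega) (by omega) (by omega) (by omega) (by omega)
        exact finish p h1 h2 h3
      · obtain ⟨p, h2, h1, h3⟩ := my_pm_helper hconn x₂ x₁ x₃ m₂ m₁ m₃ ρ₂ ρ₁ ρ₃ t ht1
          (by omega) (by omega) (by omega) (by omega) hA hB
        exact finish p h1 h2 h3
    · rcases le_total ((Γ.dist x₁ m₁ : ℤ) - ρ₁) ((Γ.dist x₃ m₃ : ℤ) - ρ₃) with hB | hB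
      · obtain ⟨p, h3, h1, h2⟩ := my_pm_helper hconn x₃ x₁ x₂ m₃ m₁ m₂ ρ₃ ρ₁ ρ₂ t ht1
          (by omega) (by omega) (by omega) (by omega) (by omega) (by omega)
        exact finish p h1 h2 h3
      · obtain ⟨p, h1, h2, h3⟩ := my_pm_helper hconn x₁ x₂ x₃ m₁ m₂ m₃ ρ₁ ρ₂ ρ₃ t ht1
          (by omega) (by omega) (by omega) (by omega) hA hB
        exact finish p h1 h2 h3
  · intro hH
    exact my_helly_to_pm hconn hH
end

section
/- Let Γ be a connected graph with β-stable intervals, let P be a geodesic in Γ, w a vertex on P, and let T, T' be paths with T_- = P_-, T'_- = P_+. Then there is a geodesic S from T_+ to T'_+ and a vertex v on S with d_Γ(w,v) ≤ β(|T| + |T'|). -/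
open SimpleGraph

private lemma moveStart {V : Type*} {Γ : SimpleGraph V} (hconn : Γ.Connected)
    {β : ℕ} (hstable : HasStableIntervals Γ β) :
    ∀ {a a' : V} (T : Γ.Walk a a') {b : V} (P : Γ.Walk a b),
      P.length = Γ.dist a b → ∀ w ∈ P.support,
      ∃ S : Γ.Walk a' b, S.length = Γ.dist a' b ∧
        ∃ v ∈ S.support, Γ.dist w v ≤ β * T.length := by
  intro a a' T
  induction T with
  | nil => exact fun P hP w hw => ⟨P, hP, w, hw, by simp⟩
  | cons h T'' ih =>
    rename_i a c a'
    intro b P hP w hw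
    obtain ⟨Q, hQ, v, hv, hwv⟩ :=
      hstable P hP w hw c ((SimpleGraph.dist_eq_one_iff_adj).mpr h.symm)
    obtain ⟨S, hS, v', hv', hvv'⟩ := ih Q hQ v hv
    refine ⟨S, hS, v', hv', ?_⟩
    calc Γ.dist w v' ≤ Γ.dist w v + Γ.dist v v' := hconn.dist_triangle
      _ ≤ β + β * T''.length := Nat.add_le_add hwv hvv'
      _ = β * (SimpleGraph.Walk.cons h T'').length := by
          simp [SimpleGraph.Walk.length_cons, Nat.mul_add, Nat.mul_succ]; ring

theorem stmt17 {V : Type*} (Γ : SimpleGraph V) (hconn : Γ.Connected)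
    (β : ℕ) (hstable : HasStableIntervals Γ β)
    {a b a' b' : V} (P : Γ.Walk a b) (hP : P.length = Γ.dist a b)
    (w : V) (hw : w ∈ P.support)
    (T : Γ.Walk a a') (T' : Γ.Walk b b') :
    ∃ S : Γ.Walk a' b', S.length = Γ.dist a' b' ∧
      ∃ v ∈ S.support, Γ.dist w v ≤ β * (T.length + T'.length) := by
  obtain ⟨S1, hS1, v1, hv1, hwv1⟩ := moveStart hconn hstable T P hP w hw
  have hS1r : S1.reverse.length = Γ.dist b a' := by
    rw [SimpleGraph.Walk.length_reverse, hS1, SimpleGraph.dist_comm]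
  obtain ⟨S2, hS2, v2, hv2, hv1v2⟩ :=
    moveStart hconn hstable T' S1.reverse hS1r v1 (by simpa using hv1)
  refine ⟨S2.reverse, ?_, v2, by simpa using hv2, ?_⟩
  · rw [SimpleGraph.Walk.length_reverse, hS2, SimpleGraph.dist_comm]
  · calc Γ.dist w v2 ≤ Γ.dist w v1 + Γ.dist v1 v2 := hconn.dist_triangle
      _ ≤ β * T.length + β * T'.length := Nat.add_le_add hwv1 hv1v2
      _ = β * (T.length + T'.length) := (Nat.mul_add ..).symm
end
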